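/- Let H=(V,E,w) be a directed hypergraph with weighted-degree vertex weights ω, and suppose ω_u > 0 for all u ∈ V. Suppose f* ∈ ℝ^V is nonzero, satisfies Σ_{u∈V} ω_u f*_u = 0, and attains the minimum D(f*) = γ₂ of the discrepancy ratio over all such vectors. Then there exists a valid splitting A for f* (a symmetric matrix with row sums ω obtained by distributing each active edge's weight over S_e(f*)×I_e(f*)) such that (W − A) f* = γ₂ · W f*; that is, f* is an eigenvector of W^{-1}(W − A) with eigenvalue γ₂. -/

import Mathlib

open Finset Matrix
open scoped Classical

noncomputable section

structure DirHyp (V E : Type) [Fintype V] [Fintype E] where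
  Tl : E → Finset V
  Hd : E → Finset V
  w : E → ℝ
  Tl_ne : ∀ e, (Tl e).Nonempty
  Hd_ne : ∀ e, (Hd e).Nonempty
  w_nonneg : ∀ e, 0 ≤ w e

variable {V E : Type} [Fintype V] [DecidableEq V] [Fintype E]

/-- Discrepancy of edge `e` w.r.t. density `f`. -/
def disc (G : DirHyp V E) (f : V → ℝ) (e : E) : ℝ :=
  (G.Tl e).sup' (G.Tl_ne e) f - (G.Hd e).inf' (G.Hd_ne e) f

/-- Weighted degree of vertex `u`. -/
def vw (G : DirHyp V E) (u : V) : ℝ :=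
  ∑ e : E, if u ∈ G.Tl e ∪ G.Hd e then G.w e else 0

/-- Total weight of a vertex subset. -/
def wS (G : DirHyp V E) (S : Finset V) : ℝ := ∑ u ∈ S, vw G u

/-- Discrepancy ratio. -/
def discRatio (G : DirHyp V E) (f : V → ℝ) : ℝ :=
  (∑ e : E, G.w e * (max (disc G f e) 0) ^ 2) / (∑ u : V, vw G u * (f u) ^ 2)

/-- `γ₂`. -/
def gamma2 (G : DirHyp V E) : ℝ :=
  sInf {x : ℝ | ∃ f : V → ℝ, f ≠ 0 ∧ (∑ u : V, vw G u * f u) = 0 ∧ x = discRatio G f}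

def outCut (G : DirHyp V E) (S : Finset V) : Finset E :=
  Finset.univ.filter fun e => (G.Tl e ∩ S).Nonempty ∧ (G.Hd e ∩ Sᶜ).Nonempty

def inCut (G : DirHyp V E) (S : Finset V) : Finset E :=
  Finset.univ.filter fun e => (G.Tl e ∩ Sᶜ).Nonempty ∧ (G.Hd e ∩ S).Nonempty

def phiPlus (G : DirHyp V E) (S : Finset V) : ℝ := (∑ e ∈ outCut G S, G.w e) / wS G S

def phiMinus (G : DirHyp V E) (S : Finset V) : ℝ := (∑ e ∈ inCut G S, G.w e) / wS G S

def phi (G : DirHyp V E) (S : Finset V) : ℝ := min (phiPlus G S) (phiMinus G S)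

/-- `S_e(f)`: the vertices of the tail attaining the maximum density. -/
def Se (G : DirHyp V E) (f : V → ℝ) (e : E) : Finset V :=
  (G.Tl e).filter fun u => f u = (G.Tl e).sup' (G.Tl_ne e) f

/-- `I_e(f)`: the vertices of the head attaining the minimum density. -/
def Ie (G : DirHyp V E) (f : V → ℝ) (e : E) : Finset V :=
  (G.Hd e).filter fun v => f v = (G.Hd e).inf' (G.Hd_ne e) f

/-- A valid splitting of the edge weights for density `f` with vertex weights `ω`:
a symmetric matrix obtained by distributing each active edge's weight over
`S_e(f) × I_e(f)`, with row sums `ω`. -/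
def ValidSplitting (G : DirHyp V E) (ω : V → ℝ) (f : V → ℝ) (A : Matrix V V ℝ) : Prop :=
  A.IsSymm ∧
  ∃ a : E → V → V → ℝ,
    (∀ e u v, 0 ≤ a e u v) ∧
    (∀ e u v, a e u v ≠ 0 → 0 < disc G f e ∧ u ∈ Se G f e ∧ v ∈ Ie G f e) ∧
    (∀ e, 0 < disc G f e → ∑ u ∈ Se G f e, ∑ v ∈ Ie G f e, a e u v = G.w e) ∧
    (∀ u v, u ≠ v → A u v = ∑ e : E, (a e u v + a e v u)) ∧
    (∀ u, ∑ v : V, A u v = ω u)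

/-- shift of sup' by a constant -/
lemma my_sup'_sub_const (s : Finset V) (hs : s.Nonempty) (g : V → ℝ) (c : ℝ) :
    s.sup' hs (fun u => g u - c) = s.sup' hs g - c := by
  apply le_antisymm
  · apply Finset.sup'_le
    intro u hu
    have := Finset.le_sup' g hu
    linarith
  · obtain ⟨u, hu, h⟩ := Finset.exists_mem_eq_sup' hs g
    rw [h]
    have := Finset.le_sup' (fun u => g u - c) hu
    exact this

lemma my_inf'_sub_const (s : Finset V) (hs : s.Nonempty) (g : V → ℝ) (c : ℝ) :
    s.inf' hs (fun u => g u - c) = s.inf' hs g - c := by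
  apply le_antisymm
  · obtain ⟨u, hu, h⟩ := Finset.exists_mem_eq_inf' hs g
    rw [h]
    have := Finset.inf'_le (fun u => g u - c) hu
    exact this
  · apply Finset.le_inf'
    intro u hu
    have := Finset.inf'_le g hu
    linarith

/-- perturbation bound for sup -/
lemma my_sup'_perturb (s : Finset V) (hs : s.Nonempty) (f g : V → ℝ)
    (hne : (s.filter fun u => f u = s.sup' hs f).Nonempty) :
    ∃ ε > 0, ∀ t : ℝ, 0 ≤ t → t ≤ ε → ∀ u ∈ s,
      f u + t * g u ≤ s.sup' hs f + t * ((s.filter fun u => f u = s.sup' hs f).sup' hne g) := by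
  set M := s.sup' hs f with hM
  set Mg := (s.filter fun u => f u = s.sup' hs f).sup' hne g with hMg
  set P := s.filter (fun u => f u ≠ M ∧ Mg < g u) with hP
  refine ⟨if h : P.Nonempty then P.inf' h (fun u => (M - f u) / (g u - Mg)) else 1, ?_, ?_⟩
  · split_ifs with h
    · rw [gt_iff_lt, Finset.lt_inf'_iff]
      intro u hu
      rw [hP, Finset.mem_filter] at hu
      have h1 : f u ≤ M := Finset.le_sup' f hu.1
      have h2 : f u < M := lt_of_le_of_ne h1 hu.2.1
      exact div_pos (by linarith) (by linarith [hu.2.2])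
    · norm_num
  · intro t ht htε u hu
    by_cases hfu : f u = M
    · have : g u ≤ Mg := Finset.le_sup' g (Finset.mem_filter.2 ⟨hu, hfu⟩)
      nlinarith
    · have h1 : f u ≤ M := Finset.le_sup' f hu
      by_cases hg : g u ≤ Mg
      · nlinarith
      · have huP : u ∈ P := Finset.mem_filter.2 ⟨hu, hfu, not_le.1 hg⟩
        have hPne : P.Nonempty := ⟨u, huP⟩
        rw [dif_pos hPne] at htε
        have h3 : t ≤ (M - f u) / (g u - Mg) :=
          le_trans htε (Finset.inf'_le _ huP)
        have h4 : 0 < g u - Mg := by linarith [not_le.1 hg]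
        have h5 : t * (g u - Mg) ≤ M - f u := by
          rw [← le_div_iff₀ h4]; exact h3
        nlinarith

/-- perturbation bound for inf -/
lemma my_inf'_perturb (s : Finset V) (hs : s.Nonempty) (f g : V → ℝ)
    (hne : (s.filter fun u => f u = s.inf' hs f).Nonempty) :
    ∃ ε > 0, ∀ t : ℝ, 0 ≤ t → t ≤ ε → ∀ u ∈ s,
      s.inf' hs f + t * ((s.filter fun u => f u = s.inf' hs f).inf' hne g) ≤ f u + t * g u := by
  set m := s.inf' hs f with hm
  set mg := (s.filter fun u => f u = s.inf' hs f).inf' hne g with hmg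
  set P := s.filter (fun u => f u ≠ m ∧ g u < mg) with hP
  refine ⟨if h : P.Nonempty then P.inf' h (fun u => (f u - m) / (mg - g u)) else 1, ?_, ?_⟩
  · split_ifs with h
    · rw [gt_iff_lt, Finset.lt_inf'_iff]
      intro u hu
      rw [hP, Finset.mem_filter] at hu
      have h1 : m ≤ f u := Finset.inf'_le f hu.1
      have h2 : m < f u := lt_of_le_of_ne h1 (Ne.symm hu.2.1)
      exact div_pos (by linarith) (by linarith [hu.2.2])
    · norm_num
  · intro t ht htε u hu
    by_cases hfu : f u = m
    · have : mg ≤ g u := Finset.inf'_le g (Finset.mem_filter.2 ⟨hu, hfu⟩)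
      nlinarith
    · have h1 : m ≤ f u := Finset.inf'_le f hu
      by_cases hg : mg ≤ g u
      · nlinarith
      · have huP : u ∈ P := Finset.mem_filter.2 ⟨hu, hfu, not_le.1 hg⟩
        have hPne : P.Nonempty := ⟨u, huP⟩
        rw [dif_pos hPne] at htε
        have h3 : t ≤ (f u - m) / (mg - g u) :=
          le_trans htε (Finset.inf'_le _ huP)
        have h4 : 0 < mg - g u := by linarith [not_le.1 hg]
        have h5 : t * (mg - g u) ≤ f u - m := by
          rw [← le_div_iff₀ h4]; exact h3
        nlinarith

/-- quadratic bound on truncated square -/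
lemma my_sq_bound (D d t : ℝ) (ht : 0 ≤ t) :
    max (D + t * d) 0 ^ 2 ≤ max D 0 ^ 2 + 2 * t * max D 0 * d + t ^ 2 * d ^ 2 := by
  rcases le_or_gt D 0 with hD | hD
  · rw [max_eq_right hD]
    rcases max_choice (D + t * d) 0 with h | h <;> rw [h]
    · have h0 : (0:ℝ) ≤ D + t * d := by rw [← h]; exact le_max_right _ _
      nlinarith
    · nlinarith [sq_nonneg (t * d)]
  · rw [max_eq_left hD.le]
    rcases max_choice (D + t * d) 0 with h | h <;> rw [h]
    · nlinarith
    · have h0 : D + t * d ≤ 0 := h ▸ le_max_left _ _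
      nlinarith [sq_nonneg (D + t * d)]

/-- a linear-quadratic function nonneg on a right neighborhood of 0 has nonneg slope -/
lemma my_slope_nonneg {a b ε : ℝ} (hε : 0 < ε)
    (h : ∀ t : ℝ, 0 < t → t ≤ ε → 0 ≤ a * t + b * t ^ 2) : 0 ≤ a := by
  by_contra ha
  push_neg at ha
  set t := min ε (-a / (2 * (|b| + 1))) with htdef
  have hb1 : (0:ℝ) < |b| + 1 := by positivity
  have ht0 : 0 < t := lt_min hε (div_pos (by linarith) (by positivity))
  have ht1 : t ≤ ε := min_le_left _ _
  have ht2 : t ≤ -a / (2 * (|b| + 1)) := min_le_right _ _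
  have hbt : b * t ≤ |b| * t := mul_le_mul_of_nonneg_right (le_abs_self b) ht0.le
  have h2 : |b| * t ≤ |b| * (-a / (2 * (|b| + 1))) :=
    mul_le_mul_of_nonneg_left ht2 (abs_nonneg b)
  have h3 : |b| * (-a / (2 * (|b| + 1))) ≤ -a / 2 := by
    have heq : |b| * (-a / (2 * (|b| + 1))) = |b| * -a / (2 * (|b| + 1)) := by ring
    rw [heq, div_le_div_iff₀ (by positivity) (by norm_num : (0:ℝ) < 2)]
    nlinarith [abs_nonneg b]
  have h4 : b * t ≤ -a / 2 := le_trans hbt (le_trans h2 h3)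
  have := h t ht0 ht1
  nlinarith

lemma my_exists_pos_le {ι : Type} [Fintype ι] (h : ι → ℝ) (hh : ∀ i, 0 < h i) :
    ∃ ε > 0, ∀ i, ε ≤ h i := by
  rcases isEmpty_or_nonempty ι with hι | hι
  · exact ⟨1, one_pos, fun i => (hι.false i).elim⟩
  · have hne : (Finset.univ : Finset ι).Nonempty := Finset.univ_nonempty
    refine ⟨Finset.univ.inf' hne h, ?_, fun i => Finset.inf'_le h (Finset.mem_univ i)⟩
    rw [gt_iff_lt, Finset.lt_inf'_iff]
    exact fun i _ => hh i
lemma Se_ne (G : DirHyp V E) (f : V → ℝ) (e : E) : (Se G f e).Nonempty := by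
  obtain ⟨u, hu, h⟩ := Finset.exists_mem_eq_sup' (G.Tl_ne e) f
  exact ⟨u, Finset.mem_filter.2 ⟨hu, h.symm⟩⟩

lemma Ie_ne (G : DirHyp V E) (f : V → ℝ) (e : E) : (Ie G f e).Nonempty := by
  obtain ⟨u, hu, h⟩ := Finset.exists_mem_eq_inf' (G.Hd_ne e) f
  exact ⟨u, Finset.mem_filter.2 ⟨hu, h.symm⟩⟩

lemma den_pos (G : DirHyp V E) (hpos : ∀ u : V, 0 < vw G u) (f : V → ℝ) (hne : f ≠ 0) :
    0 < ∑ u : V, vw G u * f u ^ 2 := by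
  obtain ⟨u0, hu0⟩ : ∃ u, f u ≠ 0 := by
    by_contra h
    push_neg at h
    exact hne (funext fun u => h u)
  apply Finset.sum_pos'
  · intro u _
    have := (hpos u).le
    positivity
  · refine ⟨u0, Finset.mem_univ u0, ?_⟩
    have h1 := hpos u0
    have h2 : 0 < f u0 ^ 2 := by positivity
    positivity

lemma gamma2_le (G : DirHyp V E) (hpos : ∀ u : V, 0 < vw G u) (f : V → ℝ) (hne : f ≠ 0)
    (horth : (∑ u : V, vw G u * f u) = 0) : gamma2 G ≤ discRatio G f := by
  apply csInf_le
  · refine ⟨0, fun x hx => ?_⟩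
    obtain ⟨h, hh, hor, hx⟩ := hx
    rw [hx]
    apply div_nonneg
    · apply Finset.sum_nonneg
      intro e _
      have := G.w_nonneg e
      positivity
    · apply Finset.sum_nonneg
      intro u _
      have := (hpos u).le
      positivity
  · exact ⟨f, hne, horth, rfl⟩

/-- the discrepancy of a perturbed vector, bounded for small positive t -/
lemma disc_perturb (G : DirHyp V E) (f g : V → ℝ) :
    ∃ ε > 0, ∀ t : ℝ, 0 ≤ t → t ≤ ε → ∀ e : E,
      disc G (f + t • g) e ≤ disc G f e +
        t * ((Se G f e).sup' (Se_ne G f e) g - (Ie G f e).inf' (Ie_ne G f e) g) := by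
  have hT := fun e => my_sup'_perturb (G.Tl e) (G.Tl_ne e) f g (Se_ne G f e)
  have hH := fun e => my_inf'_perturb (G.Hd e) (G.Hd_ne e) f g (Ie_ne G f e)
  choose εT hεT hT using hT
  choose εH hεH hH using hH
  obtain ⟨ε, hε, hle⟩ := my_exists_pos_le (fun e => min (εT e) (εH e))
    (fun e => lt_min (hεT e) (hεH e))
  refine ⟨ε, hε, fun t ht htε e => ?_⟩
  have h1 : (G.Tl e).sup' (G.Tl_ne e) (f + t • g) ≤
      (G.Tl e).sup' (G.Tl_ne e) f + t * ((Se G f e).sup' (Se_ne G f e) g) := by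
    apply Finset.sup'_le
    intro u hu
    have := hT e t ht (le_trans htε ((hle e).trans (min_le_left _ _))) u hu
    simpa [Se] using this
  have h2 : (G.Hd e).inf' (G.Hd_ne e) f + t * ((Ie G f e).inf' (Ie_ne G f e) g) ≤
      (G.Hd e).inf' (G.Hd_ne e) (f + t • g) := by
    apply Finset.le_inf'
    intro u hu
    have := hH e t ht (le_trans htε ((hle e).trans (min_le_right _ _))) u hu
    simpa [Ie] using this
  unfold disc
  linarith
lemma my_sum_split {ι : Type} [Fintype ι] (a b c : ι → ℝ) (t : ℝ) :
    ∑ i : ι, (a i + b i * t + c i * t ^ 2)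
      = (∑ i : ι, a i) + (∑ i : ι, b i) * t + (∑ i : ι, c i) * t ^ 2 := by
  rw [Finset.sum_add_distrib, Finset.sum_add_distrib, ← Finset.sum_mul, ← Finset.sum_mul]

lemma key_ineq0 (G : DirHyp V E) (hpos : ∀ u : V, 0 < vw G u) (f : V → ℝ) (hne : f ≠ 0)
    (horth : (∑ u : V, vw G u * f u) = 0) (hmin : discRatio G f = gamma2 G)
    (g : V → ℝ) (hg : (∑ u : V, vw G u * g u) = 0) :
    gamma2 G * (∑ u : V, vw G u * f u * g u) ≤
      ∑ e : E, G.w e * max (disc G f e) 0 *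
        ((Se G f e).sup' (Se_ne G f e) g - (Ie G f e).inf' (Ie_ne G f e) g) := by
  classical
  set γ := gamma2 G with hγdef
  set δ : E → ℝ := fun e =>
    (Se G f e).sup' (Se_ne G f e) g - (Ie G f e).inf' (Ie_ne G f e) g with hδdef
  set Den0 := ∑ u : V, vw G u * f u ^ 2 with hDen0def
  set N0 := ∑ e : E, G.w e * max (disc G f e) 0 ^ 2 with hN0def
  set P := ∑ e : E, G.w e * max (disc G f e) 0 * δ e with hPdef
  set R := ∑ u : V, vw G u * f u * g u with hRdef
  set Q := ∑ e : E, G.w e * δ e ^ 2 with hQdef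
  set S := ∑ u : V, vw G u * g u ^ 2 with hSdef
  have hDen0 : 0 < Den0 := den_pos G hpos f hne
  have hN0 : N0 = γ * Den0 := by
    have h := hmin
    unfold discRatio at h
    rw [div_eq_iff (ne_of_gt hDen0)] at h
    exact h
  obtain ⟨ε, hε, hdisc⟩ := disc_perturb G f g
  obtain ⟨u0, hu0⟩ : ∃ u, f u ≠ 0 := by
    by_contra hcon; push_neg at hcon; exact hne (funext fun u => hcon u)
  set t1 := |f u0| / (|g u0| + 1) with ht1def
  have ht1 : 0 < t1 := div_pos (abs_pos.2 hu0) (by positivity)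
  have key : ∀ t : ℝ, 0 < t → t ≤ min ε t1 →
      0 ≤ (2 * (P - γ * R)) * t + (Q - γ * S) * t ^ 2 := by
    intro t ht htm
    set h : V → ℝ := f + t • g with hhdef
    have happ : ∀ u, h u = f u + t * g u := fun u => by simp [hhdef]
    have hh0 : h u0 ≠ 0 := by
      have htle : t ≤ t1 := le_trans htm (min_le_right _ _)
      have h1 : t * |g u0| < |f u0| := by
        rcases eq_or_ne (g u0) 0 with hg0 | hg0
        · simpa [hg0] using abs_pos.2 hu0
        · have h2 : 0 < |g u0| := abs_pos.2 hg0
          have h3 : t * |g u0| ≤ t1 * |g u0| := mul_le_mul_of_nonneg_right htle h2.le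
          have h4 : t1 * |g u0| < |f u0| := by
            rw [ht1def, div_mul_eq_mul_div, div_lt_iff₀ (by positivity)]
            nlinarith [abs_pos.2 hu0]
          linarith
      intro hcon
      have : f u0 = -(t * g u0) := by rw [happ u0] at hcon; linarith
      have h5 : |f u0| = t * |g u0| := by
        rw [this, abs_neg, abs_mul, abs_of_pos ht]
      linarith
    have hhne : h ≠ 0 := fun hcon => hh0 (by rw [hcon]; rfl)
    have hhor : (∑ u : V, vw G u * h u) = 0 := by
      have : ∀ u ∈ Finset.univ, vw G u * h u = vw G u * f u + t * (vw G u * g u) :=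
        fun u _ => by rw [happ u]; ring
      rw [Finset.sum_congr rfl this, Finset.sum_add_distrib, horth, ← Finset.mul_sum, hg]
      ring
    have hγle : γ ≤ discRatio G h := gamma2_le G hpos h hhne hhor
    have hDenh : 0 < ∑ u : V, vw G u * h u ^ 2 := den_pos G hpos h hhne
    have step1 : γ * (∑ u : V, vw G u * h u ^ 2) ≤
        ∑ e : E, G.w e * max (disc G h e) 0 ^ 2 := by
      unfold discRatio at hγle
      rw [le_div_iff₀ hDenh] at hγle
      linarith
    have hDenexp : (∑ u : V, vw G u * h u ^ 2) = Den0 + (2 * R) * t + S * t ^ 2 := by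
      have hterm : ∀ u ∈ Finset.univ, vw G u * h u ^ 2 =
          vw G u * f u ^ 2 + (2 * (vw G u * f u * g u)) * t + (vw G u * g u ^ 2) * t ^ 2 :=
        fun u _ => by rw [happ u]; ring
      rw [Finset.sum_congr rfl hterm, my_sum_split, hDen0def, hRdef, hSdef, Finset.mul_sum]
    have hNum : (∑ e : E, G.w e * max (disc G h e) 0 ^ 2) ≤ N0 + (2 * P) * t + Q * t ^ 2 := by
      have hterm : ∀ e ∈ Finset.univ, G.w e * max (disc G h e) 0 ^ 2 ≤
          G.w e * max (disc G f e) 0 ^ 2 + (2 * (G.w e * max (disc G f e) 0 * δ e)) * t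
            + (G.w e * δ e ^ 2) * t ^ 2 := by
        intro e _
        have hde := hdisc t ht.le (le_trans htm (min_le_left _ _)) e
        have h1 : max (disc G h e) 0 ≤ max (disc G f e + t * δ e) 0 :=
          max_le_max hde (le_refl 0)
        have h2 : max (disc G h e) 0 ^ 2 ≤ max (disc G f e + t * δ e) 0 ^ 2 :=
          pow_le_pow_left₀ (le_max_right _ _) h1 2
        have h3 := my_sq_bound (disc G f e) (δ e) t ht.le
        have h4 := G.w_nonneg e
        nlinarith
      calc (∑ e : E, G.w e * max (disc G h e) 0 ^ 2)
          ≤ ∑ e : E, (G.w e * max (disc G f e) 0 ^ 2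
              + (2 * (G.w e * max (disc G f e) 0 * δ e)) * t
              + (G.w e * δ e ^ 2) * t ^ 2) := Finset.sum_le_sum hterm
        _ = N0 + (2 * P) * t + Q * t ^ 2 := by
            rw [my_sum_split, hN0def, hPdef, hQdef, Finset.mul_sum]
    have hcomb : γ * (Den0 + (2 * R) * t + S * t ^ 2) ≤ N0 + (2 * P) * t + Q * t ^ 2 := by
      rw [← hDenexp]
      exact le_trans step1 hNum
    nlinarith [hcomb, hN0]
  have hslope := my_slope_nonneg (lt_min hε ht1) key
  linarith

lemma key_ineq (G : DirHyp V E) (hpos : ∀ u : V, 0 < vw G u) (f : V → ℝ) (hne : f ≠ 0)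
    (horth : (∑ u : V, vw G u * f u) = 0) (hmin : discRatio G f = gamma2 G)
    (g : V → ℝ) :
    gamma2 G * (∑ u : V, vw G u * f u * g u) ≤
      ∑ e : E, G.w e * max (disc G f e) 0 *
        ((Se G f e).sup' (Se_ne G f e) g - (Ie G f e).inf' (Ie_ne G f e) g) := by
  classical
  have hVne : Nonempty V := by
    obtain ⟨u0, _⟩ : ∃ u, f u ≠ 0 := by
      by_contra hcon; push_neg at hcon; exact hne (funext fun u => hcon u)
    exact ⟨u0⟩
  have hW : 0 < ∑ u : V, vw G u :=
    Finset.sum_pos (fun u _ => hpos u) Finset.univ_nonempty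
  set c := (∑ u : V, vw G u * g u) / (∑ u : V, vw G u) with hcdef
  set g0 : V → ℝ := fun u => g u - c with hg0def
  have hg0 : (∑ u : V, vw G u * g0 u) = 0 := by
    have : ∀ u ∈ Finset.univ, vw G u * g0 u = vw G u * g u - vw G u * c :=
      fun u _ => by rw [hg0def]; ring
    rw [Finset.sum_congr rfl this, Finset.sum_sub_distrib, ← Finset.sum_mul, hcdef]
    field_simp
    ring
  have hkey := key_ineq0 G hpos f hne horth hmin g0 hg0
  have hR : (∑ u : V, vw G u * f u * g0 u) = ∑ u : V, vw G u * f u * g u := by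
    have : ∀ u ∈ Finset.univ, vw G u * f u * g0 u =
        vw G u * f u * g u - (vw G u * f u) * c := fun u _ => by rw [hg0def]; ring
    rw [Finset.sum_congr rfl this, Finset.sum_sub_distrib, ← Finset.sum_mul, horth]
    ring
  have hδ : ∀ e : E, (Se G f e).sup' (Se_ne G f e) g0 - (Ie G f e).inf' (Ie_ne G f e) g0 =
      (Se G f e).sup' (Se_ne G f e) g - (Ie G f e).inf' (Ie_ne G f e) g := by
    intro e
    rw [hg0def]
    rw [my_sup'_sub_const _ (Se_ne G f e) g c, my_inf'_sub_const _ (Ie_ne G f e) g c]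
    ring
  rw [hR] at hkey
  calc gamma2 G * (∑ u : V, vw G u * f u * g u)
      ≤ ∑ e : E, G.w e * max (disc G f e) 0 *
          ((Se G f e).sup' (Se_ne G f e) g0 - (Ie G f e).inf' (Ie_ne G f e) g0) := hkey
    _ = _ := Finset.sum_congr rfl fun e _ => by rw [hδ e]
/-- the scaled simplex supported on a finite set -/
def simplexSet (s : Finset V) (W : ℝ) : Set (V → ℝ) :=
  {c : V → ℝ | (∀ u, 0 ≤ c u) ∧ (∀ u, u ∉ s → c u = 0) ∧ ∑ u : V, c u = W}

lemma simplexSet_convex (s : Finset V) (W : ℝ) : Convex ℝ (simplexSet s W) := by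
  intro x hx y hy a b ha hb hab
  obtain ⟨hx1, hx2, hx3⟩ := hx
  obtain ⟨hy1, hy2, hy3⟩ := hy
  refine ⟨fun u => ?_, fun u hu => ?_, ?_⟩
  · have : (a • x + b • y) u = a * x u + b * y u := by simp
    rw [this]
    exact add_nonneg (mul_nonneg ha (hx1 u)) (mul_nonneg hb (hy1 u))
  · have : (a • x + b • y) u = a * x u + b * y u := by simp
    rw [this, hx2 u hu, hy2 u hu]
    ring
  · have : ∀ u ∈ Finset.univ, (a • x + b • y) u = a * x u + b * y u :=
      fun u _ => by simp
    rw [Finset.sum_congr rfl this, Finset.sum_add_distrib, ← Finset.mul_sum, ← Finset.mul_sum,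
      hx3, hy3, ← add_mul, hab, one_mul]

lemma simplexSet_isCompact (s : Finset V) (W : ℝ) (hW : 0 ≤ W) :
    IsCompact (simplexSet s W) := by
  apply Metric.isCompact_of_isClosed_isBounded
  · have heq : simplexSet s W =
        {c : V → ℝ | ∀ u, 0 ≤ c u} ∩ ({c : V → ℝ | ∀ u, u ∉ s → c u = 0} ∩
          {c : V → ℝ | ∑ u : V, c u = W}) := by
      ext c
      simp only [simplexSet, Set.mem_setOf_eq, Set.mem_inter_iff]
    rw [heq]
    refine IsClosed.inter ?_ (IsClosed.inter ?_ ?_)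
    · have h2 : {c : V → ℝ | ∀ u, 0 ≤ c u} = ⋂ u, {c : V → ℝ | 0 ≤ c u} := by
        ext c; simp
      rw [h2]
      exact isClosed_iInter fun u => isClosed_le continuous_const (continuous_apply u)
    · have h2 : {c : V → ℝ | ∀ u, u ∉ s → c u = 0} =
          ⋂ u, {c : V → ℝ | u ∉ s → c u = 0} := by ext c; simp
      rw [h2]
      refine isClosed_iInter fun u => ?_
      by_cases hu : u ∈ s
      · have : {c : V → ℝ | u ∉ s → c u = 0} = Set.univ := by
          ext c; simp [hu]
        rw [this]; exact isClosed_univ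
      · have : {c : V → ℝ | u ∉ s → c u = 0} = {c : V → ℝ | c u = 0} := by
          ext c; simp [hu]
        rw [this]
        exact isClosed_eq (continuous_apply u) continuous_const
    · exact isClosed_eq (continuous_finset_sum _ fun u _ => continuous_apply u)
        continuous_const
  · rw [isBounded_iff_forall_norm_le]
    refine ⟨W, fun c hc => ?_⟩
    obtain ⟨h1, _, h3⟩ := hc
    rw [pi_norm_le_iff_of_nonneg hW]
    intro u
    rw [Real.norm_eq_abs, abs_of_nonneg (h1 u)]
    calc c u ≤ ∑ u : V, c u :=
          Finset.single_le_sum (fun i _ => h1 i) (Finset.mem_univ u)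
      _ = W := h3

lemma simplexSet_mem_single (s : Finset V) (W : ℝ) (hW : 0 ≤ W) {u0 : V} (hu0 : u0 ∈ s) :
    (fun u => if u = u0 then W else 0) ∈ simplexSet s W := by
  refine ⟨fun u => ?_, fun u hu => ?_, ?_⟩
  · dsimp only; split_ifs <;> simp [hW]
  · dsimp only
    rw [if_neg]
    rintro rfl
    exact hu hu0
  · simp [Finset.sum_ite_eq' Finset.univ u0 (fun _ => W)]
lemma exists_marginals (G : DirHyp V E) (hpos : ∀ u : V, 0 < vw G u) (f : V → ℝ)
    (hne : f ≠ 0) (horth : (∑ u : V, vw G u * f u) = 0)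
    (hmin : discRatio G f = gamma2 G) :
    ∃ c d : E → V → ℝ,
      (∀ e u, 0 ≤ c e u) ∧ (∀ e u, u ∉ Se G f e → c e u = 0) ∧
      (∀ e, ∑ u : V, c e u = G.w e * max (disc G f e) 0) ∧
      (∀ e u, 0 ≤ d e u) ∧ (∀ e u, u ∉ Ie G f e → d e u = 0) ∧
      (∀ e, ∑ u : V, d e u = G.w e * max (disc G f e) 0) ∧
      (∀ u, (∑ e : E, (c e u - d e u)) = gamma2 G * (vw G u * f u)) := by
  classical
  set We : E → ℝ := fun e => G.w e * max (disc G f e) 0 with hWedef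
  have hWe : ∀ e, 0 ≤ We e := fun e => mul_nonneg (G.w_nonneg e) (le_max_right _ _)
  set T1 : Set (E → V → ℝ) := Set.pi Set.univ (fun e => simplexSet (Se G f e) (We e))
    with hT1def
  set T2 : Set (E → V → ℝ) := Set.pi Set.univ (fun e => simplexSet (Ie G f e) (We e))
    with hT2def
  set φ : ((E → V → ℝ) × (E → V → ℝ)) →ₗ[ℝ] (V → ℝ) :=
    { toFun := fun p => (∑ e : E, p.1 e) - (∑ e : E, p.2 e)
      map_add' := by
        intro p q
        simp only [Prod.fst_add, Prod.snd_add, Pi.add_apply, Finset.sum_add_distrib]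
        abel
      map_smul' := by
        intro r p
        simp only [Prod.smul_fst, Prod.smul_snd, Pi.smul_apply, RingHom.id_apply,
          smul_sub, Finset.smul_sum] } with hφdef
  have hφapp : ∀ p : ((E → V → ℝ) × (E → V → ℝ)),
      φ p = (∑ e : E, p.1 e) - (∑ e : E, p.2 e) := fun p => rfl
  have hφcont : Continuous φ := by
    have heq : (φ : ((E → V → ℝ) × (E → V → ℝ)) → (V → ℝ)) =
        fun p => (∑ e : E, p.1 e) - (∑ e : E, p.2 e) := rfl
    rw [heq]
    exact (continuous_finset_sum _ fun e _ => (continuous_apply e).comp continuous_fst).sub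
      (continuous_finset_sum _ fun e _ => (continuous_apply e).comp continuous_snd)
  set K : Set (V → ℝ) := φ '' (T1 ×ˢ T2) with hKdef
  have hKconv : Convex ℝ K := by
    apply Convex.linear_image
    exact Convex.prod (convex_pi fun e _ => simplexSet_convex _ _)
      (convex_pi fun e _ => simplexSet_convex _ _)
  have hKcomp : IsCompact K := by
    apply IsCompact.image _ hφcont
    exact (isCompact_univ_pi fun e => simplexSet_isCompact _ _ (hWe e)).prod
      (isCompact_univ_pi fun e => simplexSet_isCompact _ _ (hWe e))
  set b : V → ℝ := fun u => gamma2 G * (vw G u * f u) with hbdef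
  have hbK : b ∈ K := by
    by_contra hb
    obtain ⟨ψ, s0, hs0, hbs0⟩ :=
      geometric_hahn_banach_closed_point hKconv hKcomp.isClosed hb
    set g : V → ℝ := fun u => ψ (Pi.single u (1:ℝ)) with hgdef
    have hψ : ∀ x : V → ℝ, ψ x = ∑ u : V, x u * g u := by
      intro x
      have hx : x = ∑ u : V, x u • (Pi.single u (1:ℝ) : V → ℝ) := by
        funext v
        rw [Finset.sum_apply]
        simp [Pi.single_apply]
      conv_lhs => rw [hx]
      rw [map_sum]
      simp only [_root_.map_smul, smul_eq_mul]
      rfl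
    choose us hus hgus using fun e => Finset.exists_mem_eq_sup' (Se_ne G f e) g
    choose vs hvs hgvs using fun e => Finset.exists_mem_eq_inf' (Ie_ne G f e) g
    set cstar : E → V → ℝ := fun e u => if u = us e then We e else 0 with hcstardef
    set dstar : E → V → ℝ := fun e u => if u = vs e then We e else 0 with hdstardef
    have hmem : (cstar, dstar) ∈ T1 ×ˢ T2 :=
      ⟨fun e _ => simplexSet_mem_single _ _ (hWe e) (hus e),
       fun e _ => simplexSet_mem_single _ _ (hWe e) (hvs e)⟩
    have hkK : φ (cstar, dstar) ∈ K := ⟨(cstar, dstar), hmem, rfl⟩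
    have hval : ψ (φ (cstar, dstar)) = ∑ e : E, (We e * g (us e) - We e * g (vs e)) := by
      rw [hψ]
      have h1 : ∀ u ∈ Finset.univ, (φ (cstar, dstar)) u * g u
          = (∑ e : E, cstar e u * g u) - (∑ e : E, dstar e u * g u) := by
        intro u _
        have h2 : (φ (cstar, dstar)) u = (∑ e : E, cstar e u) - (∑ e : E, dstar e u) := by
          rw [hφapp]
          rw [Pi.sub_apply, Finset.sum_apply, Finset.sum_apply]
        rw [h2, sub_mul, Finset.sum_mul, Finset.sum_mul]
      rw [Finset.sum_congr rfl h1, Finset.sum_sub_distrib, Finset.sum_comm,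
        Finset.sum_comm (f := fun u e => dstar e u * g u), ← Finset.sum_sub_distrib]
      refine Finset.sum_congr rfl fun e _ => ?_
      have hc : (∑ u : V, cstar e u * g u) = We e * g (us e) := by
        have : ∀ u ∈ Finset.univ, cstar e u * g u
            = if u = us e then We e * g u else 0 := by
          intro u _
          rw [hcstardef]
          dsimp only
          split_ifs <;> ring
        rw [Finset.sum_congr rfl this, Finset.sum_ite_eq' Finset.univ (us e)
          (fun u => We e * g u), if_pos (Finset.mem_univ _)]
      have hd : (∑ u : V, dstar e u * g u) = We e * g (vs e) := by
        have : ∀ u ∈ Finset.univ, dstar e u * g u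
            = if u = vs e then We e * g u else 0 := by
          intro u _
          rw [hdstardef]
          dsimp only
          split_ifs <;> ring
        rw [Finset.sum_congr rfl this, Finset.sum_ite_eq' Finset.univ (vs e)
          (fun u => We e * g u), if_pos (Finset.mem_univ _)]
      rw [hc, hd]
    have hψb : ψ b = gamma2 G * (∑ u : V, vw G u * f u * g u) := by
      rw [hψ, Finset.mul_sum]
      exact Finset.sum_congr rfl fun u _ => by rw [hbdef]; ring
    have hkey := key_ineq G hpos f hne horth hmin g
    have hsum : (∑ e : E, (We e * g (us e) - We e * g (vs e)))
        = ∑ e : E, G.w e * max (disc G f e) 0 *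
            ((Se G f e).sup' (Se_ne G f e) g - (Ie G f e).inf' (Ie_ne G f e) g) := by
      refine Finset.sum_congr rfl fun e _ => ?_
      rw [hgus e, hgvs e, hWedef]
      ring
    have hlt1 := hs0 _ hkK
    rw [hval] at hlt1
    rw [hψb] at hbs0
    rw [hsum] at hlt1
    linarith
  obtain ⟨⟨c, d⟩, hmem, hφcd⟩ := hbK
  obtain ⟨hcT, hdT⟩ := hmem
  have hc : ∀ e, c e ∈ simplexSet (Se G f e) (We e) := fun e => hcT e (Set.mem_univ e)
  have hd : ∀ e, d e ∈ simplexSet (Ie G f e) (We e) := fun e => hdT e (Set.mem_univ e)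
  refine ⟨c, d, fun e u => (hc e).1 u, fun e u => (hc e).2.1 u, fun e => (hc e).2.2,
    fun e u => (hd e).1 u, fun e u => (hd e).2.1 u, fun e => (hd e).2.2, fun u => ?_⟩
  have h2 := congrFun hφcd u
  rw [hφapp] at h2
  rw [Pi.sub_apply, Finset.sum_apply, Finset.sum_apply] at h2
  rw [Finset.sum_sub_distrib]
  exact h2
/-- a minimizer `f*` of the discrepancy ratio among nonzero vectors
with `Σ_u ω_u f*_u = 0` is an eigenvector with eigenvalue `γ₂`:
there is a valid splitting `A` for `f*` with `(W - A) f* = γ₂ • (W f*)`. -/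
theorem minimizer_is_eigenvector (G : DirHyp V E) (hpos : ∀ u : V, 0 < vw G u)
    (fstar : V → ℝ) (hne : fstar ≠ 0)
    (horth : (∑ u : V, vw G u * fstar u) = 0)
    (hmin : discRatio G fstar = gamma2 G) :
    ∃ A : Matrix V V ℝ, ValidSplitting G (vw G) fstar A ∧
      (Matrix.diagonal (vw G) - A) *ᵥ fstar
        = gamma2 G • (Matrix.diagonal (vw G) *ᵥ fstar) := by
  classical
  obtain ⟨c, d, hc1, hc2, hc3, hd1, hd2, hd3, hmarg⟩ :=
    exists_marginals G hpos fstar hne horth hmin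
  have hczero : ∀ e, G.w e * max (disc G fstar e) 0 = 0 → ∀ u, c e u = 0 := by
    intro e h u
    have hsum : ∑ u : V, c e u = 0 := by rw [hc3 e]; exact h
    exact (Finset.sum_eq_zero_iff_of_nonneg (fun i _ => hc1 e i)).1 hsum u (Finset.mem_univ u)
  have hdzero : ∀ e, G.w e * max (disc G fstar e) 0 = 0 → ∀ u, d e u = 0 := by
    intro e h u
    have hsum : ∑ u : V, d e u = 0 := by rw [hd3 e]; exact h
    exact (Finset.sum_eq_zero_iff_of_nonneg (fun i _ => hd1 e i)).1 hsum u (Finset.mem_univ u)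
  set a : E → V → V → ℝ := fun e u v =>
    if h : 0 < disc G fstar e ∧ G.w e ≠ 0 then
      c e u * d e v / (G.w e * disc G fstar e ^ 2) else 0 with hadef
  have ha_nonneg : ∀ e u v, 0 ≤ a e u v := by
    intro e u v
    rw [hadef]
    dsimp only
    split_ifs with h
    · have hw : 0 < G.w e := lt_of_le_of_ne (G.w_nonneg e) (Ne.symm h.2)
      have hdp : (0:ℝ) ≤ G.w e * disc G fstar e ^ 2 := by positivity
      exact div_nonneg (mul_nonneg (hc1 e u) (hd1 e v)) hdp
    · exact le_refl 0
  have ha_supp : ∀ e u v, a e u v ≠ 0 →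
      0 < disc G fstar e ∧ u ∈ Se G fstar e ∧ v ∈ Ie G fstar e := by
    intro e u v hz
    rw [hadef] at hz
    dsimp only at hz
    by_cases h : 0 < disc G fstar e ∧ G.w e ≠ 0
    · rw [dif_pos h] at hz
      refine ⟨h.1, ?_, ?_⟩
      · by_contra hu
        rw [hc2 e u hu] at hz
        simp at hz
      · by_contra hv
        rw [hd2 e v hv] at hz
        simp at hz
    · rw [dif_neg h] at hz
      exact absurd rfl hz
  -- row/column marginals of a
  have hrow : ∀ e u, disc G fstar e * (∑ v : V, a e u v) = c e u := by
    intro e u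
    by_cases h : 0 < disc G fstar e ∧ G.w e ≠ 0
    · have ha : ∀ v, a e u v = c e u * d e v / (G.w e * disc G fstar e ^ 2) :=
        fun v => by rw [hadef]; exact dif_pos h
      rw [Finset.sum_congr rfl (fun v _ => ha v), ← Finset.sum_div, ← Finset.mul_sum, hd3 e,
        max_eq_left h.1.le]
      have hwne := h.2
      have hdne : disc G fstar e ≠ 0 := ne_of_gt h.1
      field_simp
    · have hWe0 : G.w e * max (disc G fstar e) 0 = 0 := by
        rcases not_and_or.1 h with h1 | h1
        · rw [max_eq_right (not_lt.1 h1), mul_zero]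
        · push_neg at h1; rw [h1, zero_mul]
      have ha : ∀ v, a e u v = 0 := fun v => by rw [hadef]; exact dif_neg h
      rw [Finset.sum_congr rfl (fun v _ => ha v), Finset.sum_const_zero, mul_zero,
        hczero e hWe0 u]
  have hcol : ∀ e u, disc G fstar e * (∑ v : V, a e v u) = d e u := by
    intro e u
    by_cases h : 0 < disc G fstar e ∧ G.w e ≠ 0
    · have ha : ∀ v, a e v u = c e v * d e u / (G.w e * disc G fstar e ^ 2) :=
        fun v => by rw [hadef]; exact dif_pos h
      have hterm : ∀ v ∈ Finset.univ, a e v u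
          = d e u * c e v / (G.w e * disc G fstar e ^ 2) := by
        intro v _; rw [ha v]; ring
      rw [Finset.sum_congr rfl hterm, ← Finset.sum_div, ← Finset.mul_sum, hc3 e,
        max_eq_left h.1.le]
      have hwne := h.2
      have hdne : disc G fstar e ≠ 0 := ne_of_gt h.1
      field_simp
    · have hWe0 : G.w e * max (disc G fstar e) 0 = 0 := by
        rcases not_and_or.1 h with h1 | h1
        · rw [max_eq_right (not_lt.1 h1), mul_zero]
        · push_neg at h1; rw [h1, zero_mul]
      have ha : ∀ v, a e v u = 0 := fun v => by rw [hadef]; exact dif_neg h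
      rw [Finset.sum_congr rfl (fun v _ => ha v), Finset.sum_const_zero, mul_zero,
        hdzero e hWe0 u]
  set B : V → V → ℝ := fun u v => ∑ e : E, (a e u v + a e v u) with hBdef
  have hBsymm : ∀ u v, B u v = B v u := by
    intro u v
    rw [hBdef]
    exact Finset.sum_congr rfl fun e _ => add_comm _ _
  set A : Matrix V V ℝ := Matrix.of fun u v =>
    if u = v then vw G u - ∑ v' ∈ Finset.univ.erase u, B u v' else B u v with hAdef
  have hAapp : ∀ u v, A u v =
      if u = v then vw G u - ∑ v' ∈ Finset.univ.erase u, B u v' else B u v :=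
    fun u v => rfl
  have hArow : ∀ u, ∑ v : V, A u v = vw G u := by
    intro u
    rw [← Finset.add_sum_erase Finset.univ (fun v => A u v) (Finset.mem_univ u)]
    have h1 : A u u = vw G u - ∑ v' ∈ Finset.univ.erase u, B u v' := by
      rw [hAapp, if_pos rfl]
    have h2 : ∀ v ∈ Finset.univ.erase u, A u v = B u v := by
      intro v hv
      rw [hAapp, if_neg (fun h => (Finset.mem_erase.1 hv).1 h.symm)]
    rw [h1, Finset.sum_congr rfl h2]
    ring
  -- the eigen computation
  have hAmul : ∀ u, (∑ v : V, A u v * fstar v)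
      = vw G u * fstar u - gamma2 G * (vw G u * fstar u) := by
    intro u
    have hid : ∀ v ∈ Finset.univ, (a · u v + a · v u) = (a · u v + a · v u) := fun _ _ => rfl
    -- step 1: expand
    rw [← Finset.add_sum_erase Finset.univ (fun v => A u v * fstar v) (Finset.mem_univ u)]
    have h1 : A u u * fstar u
        = (vw G u - ∑ v' ∈ Finset.univ.erase u, B u v') * fstar u := by
      rw [hAapp, if_pos rfl]
    have h2 : ∀ v ∈ Finset.univ.erase u, A u v * fstar v = B u v * fstar v := by
      intro v hv
      rw [hAapp, if_neg (fun h => (Finset.mem_erase.1 hv).1 h.symm)]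
    rw [h1, Finset.sum_congr rfl h2]
    have hsplit : (vw G u - ∑ v' ∈ Finset.univ.erase u, B u v') * fstar u
          + ∑ v ∈ Finset.univ.erase u, B u v * fstar v
        = vw G u * fstar u + ∑ v ∈ Finset.univ.erase u, B u v * (fstar v - fstar u) := by
      rw [Finset.sum_congr rfl (fun v (_ : v ∈ Finset.univ.erase u) =>
        (mul_sub (B u v) (fstar v) (fstar u) : B u v * (fstar v - fstar u) = _)),
        Finset.sum_sub_distrib, ← Finset.sum_mul]
      ring
    rw [hsplit]
    -- step 2: extend the erased sum to univ
    have hext : ∑ v ∈ Finset.univ.erase u, B u v * (fstar v - fstar u)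
        = ∑ v : V, B u v * (fstar v - fstar u) := by
      apply Finset.sum_subset (Finset.subset_univ _)
      intro x _ hx
      have hxu : x = u := by
        by_contra hcon
        exact hx (Finset.mem_erase.2 ⟨hcon, Finset.mem_univ x⟩)
      rw [hxu]
      simp
    rw [hext]
    -- step 3: pointwise identities
    have hid1 : ∀ e v, a e u v * (fstar v - fstar u) = -(disc G fstar e * a e u v) := by
      intro e v
      by_cases hz : a e u v = 0
      · rw [hz]; ring
      · obtain ⟨hact, huS, hvI⟩ := ha_supp e u v hz
        have hu' : fstar u = (G.Tl e).sup' (G.Tl_ne e) fstar := (Finset.mem_filter.1 huS).2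
        have hv' : fstar v = (G.Hd e).inf' (G.Hd_ne e) fstar := (Finset.mem_filter.1 hvI).2
        have : fstar v - fstar u = -(disc G fstar e) := by
          rw [hu', hv']
          unfold disc
          ring
        rw [this]
        ring
    have hid2 : ∀ e v, a e v u * (fstar v - fstar u) = disc G fstar e * a e v u := by
      intro e v
      by_cases hz : a e v u = 0
      · rw [hz]; ring
      · obtain ⟨hact, hvS, huI⟩ := ha_supp e v u hz
        have hv' : fstar v = (G.Tl e).sup' (G.Tl_ne e) fstar := (Finset.mem_filter.1 hvS).2
        have hu' : fstar u = (G.Hd e).inf' (G.Hd_ne e) fstar := (Finset.mem_filter.1 huI).2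
        have : fstar v - fstar u = disc G fstar e := by
          rw [hu', hv']
          unfold disc
          ring
        rw [this]
        ring
    -- step 4: the sum equals Σ_e (d e u - c e u)
    have hmain : ∑ v : V, B u v * (fstar v - fstar u) = ∑ e : E, (d e u - c e u) := by
      have hB : ∀ v ∈ Finset.univ, B u v * (fstar v - fstar u)
          = ∑ e : E, (a e u v + a e v u) * (fstar v - fstar u) := by
        intro v _
        rw [hBdef]
        dsimp only
        rw [Finset.sum_mul]
      rw [Finset.sum_congr rfl hB, Finset.sum_comm]
      refine Finset.sum_congr rfl fun e _ => ?_
      have hterm : ∀ v ∈ Finset.univ, (a e u v + a e v u) * (fstar v - fstar u)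
          = disc G fstar e * a e v u - disc G fstar e * a e u v := by
        intro v _
        rw [add_mul, hid1 e v, hid2 e v]
        ring
      rw [Finset.sum_congr rfl hterm, Finset.sum_sub_distrib, ← Finset.mul_sum,
        ← Finset.mul_sum, hcol e u, hrow e u]
    rw [hmain]
    have := hmarg u
    have hneg : ∑ e : E, (d e u - c e u) = -(∑ e : E, (c e u - d e u)) := by
      rw [← Finset.sum_neg_distrib]
      exact Finset.sum_congr rfl fun e _ => by ring
    rw [hneg, this]
    ring
  refine ⟨A, ⟨?_, a, ha_nonneg, ha_supp, ?_, ?_, hArow⟩, ?_⟩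
  · -- symmetry
    apply Matrix.ext
    intro i j
    rw [Matrix.transpose_apply]
    by_cases hij : i = j
    · rw [hij]
    · rw [hAapp, hAapp, if_neg hij, if_neg (fun h => hij h.symm), hBsymm]
  · -- edge sums
    intro e hact
    by_cases hw : G.w e = 0
    · have : ∀ u ∈ Se G fstar e, ∀ v ∈ Ie G fstar e, a e u v = 0 := by
        intro u _ v _
        rw [hadef]
        exact dif_neg (fun h => h.2 hw)
      rw [hw]
      rw [Finset.sum_congr rfl (fun u hu => Finset.sum_congr rfl (this u hu))]
      simp
    · have ha : ∀ u v, a e u v = c e u * d e v / (G.w e * disc G fstar e ^ 2) :=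
        fun u v => by rw [hadef]; exact dif_pos ⟨hact, hw⟩
      have hSe : ∑ u ∈ Se G fstar e, c e u = G.w e * max (disc G fstar e) 0 := by
        rw [Finset.sum_subset (Finset.subset_univ _) (fun x _ hx => hc2 e x hx)]
        exact hc3 e
      have hIe : ∑ v ∈ Ie G fstar e, d e v = G.w e * max (disc G fstar e) 0 := by
        rw [Finset.sum_subset (Finset.subset_univ _) (fun x _ hx => hd2 e x hx)]
        exact hd3 e
      have hinner : ∀ u ∈ Se G fstar e, ∑ v ∈ Ie G fstar e, a e u v
          = c e u * (G.w e * max (disc G fstar e) 0) / (G.w e * disc G fstar e ^ 2) := by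
        intro u _
        rw [Finset.sum_congr rfl (fun v (_ : v ∈ Ie G fstar e) => ha u v),
          ← Finset.sum_div, ← Finset.mul_sum, hIe]
      rw [Finset.sum_congr rfl hinner, ← Finset.sum_div, ← Finset.sum_mul, hSe,
        max_eq_left hact.le]
      have hdne : disc G fstar e ≠ 0 := ne_of_gt hact
      rw [div_eq_iff (by positivity : G.w e * disc G fstar e ^ 2 ≠ 0)]
      ring
  · -- off-diagonal entries
    intro u v huv
    rw [hAapp, if_neg huv]
  · -- the eigenvector identity
    funext u
    rw [Matrix.sub_mulVec, Pi.sub_apply, Matrix.mulVec_diagonal, Pi.smul_apply,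
      Matrix.mulVec_diagonal, smul_eq_mul]
    have : (A *ᵥ fstar) u = ∑ v : V, A u v * fstar v := by
      rw [Matrix.mulVec, dotProduct]
    rw [this, hAmul u]
    ring
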